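/- Operating-point independence of incremental quantities: suppose the fault-time network equation Y ⬝ (v_F, v_J, v_C, v_S) = (−Y_F ⬝ v_F, −Y_J ⬝ v_J, i_C + Y_C ⬝ v_C, i_S) and the prefault network equation Y ⬝ (v_F', v_J', v_C', v_S') = (0, −Y_J ⬝ v_J', i_C' + Y_C ⬝ v_C', i_S') both hold, that v_S = v_S' and i_C = i_C', and that the matrix Y_LHS is invertible. Then the vector x = (ṽ_F, ṽ_J, ṽ_C, ĩ_S) of incremental quantities equals Y_LHS⁻¹ ⬝ Y_RHS ⬝ v_F'; in particular, x is uniquely determined by the prefault fault-bus voltage v_F(t−δ) and the matrices Y, Y_F, Y_J, Y_C, and does not otherwise depend on the network's fault-time or prefault operating point. -/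
import Mathlib


open Matrix

/-- Assemble a vector on `ι = nF ⊕ nJ ⊕ nC ⊕ nS` from its four blocks. -/
def blockVec {nF nJ nC nS : Type*} (xF : nF → ℂ) (xJ : nJ → ℂ) (xC : nC → ℂ)
    (xS : nS → ℂ) : nF ⊕ nJ ⊕ nC ⊕ nS → ℂ :=
  Sum.elim xF (Sum.elim xJ (Sum.elim xC xS))

/-- The correction matrix `B`: `Y_F` in the (F,F) block, `Y_J` in the (J,J)
block, `−Y_C` in the (C,C) block, the S block-column equal to `−I_S − Y_{·,S}`
(where `I_S` has the identity in the S rows and zeros elsewhere and `Y_{·,S}`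
is the S block-column of `Y`), and zeros in all other blocks.  Then
`Y_LHS = Y + B`. -/
def Bmat {nF nJ nC nS : Type*}
    [DecidableEq nF] [DecidableEq nJ] [DecidableEq nC] [DecidableEq nS]
    (Y : Matrix (nF ⊕ nJ ⊕ nC ⊕ nS) (nF ⊕ nJ ⊕ nC ⊕ nS) ℂ)
    (YF : Matrix nF nF ℂ) (YJ : Matrix nJ nJ ℂ) (YC : Matrix nC nC ℂ) :
    Matrix (nF ⊕ nJ ⊕ nC ⊕ nS) (nF ⊕ nJ ⊕ nC ⊕ nS) ℂ :=
  Matrix.of fun r c =>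
    match r, c with
    | r', Sum.inr (Sum.inr (Sum.inr s)) =>
        -(if r' = Sum.inr (Sum.inr (Sum.inr s)) then 1 else 0)
          - Y r' (Sum.inr (Sum.inr (Sum.inr s)))
    | Sum.inl i, Sum.inl j => YF i j
    | Sum.inr (Sum.inl i), Sum.inr (Sum.inl j) => YJ i j
    | Sum.inr (Sum.inr (Sum.inl i)), Sum.inr (Sum.inr (Sum.inl j)) => -YC i j
    | _, _ => 0

/-- The right-hand-side matrix `Y_RHS`: `−Y_F` in the F rows, zeros elsewhere. -/
def YRHSmat {nF nJ nC nS : Type*} (YF : Matrix nF nF ℂ) :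
    Matrix (nF ⊕ nJ ⊕ nC ⊕ nS) nF ℂ :=
  Matrix.of fun r j =>
    match r with
    | Sum.inl i => -YF i j
    | _ => 0


/-- **Operating-point independence of incremental quantities.**
If the fault-time and prefault network equations hold, the sources are periodic
(`v_S = v_S'`, `i_C = i_C'`), and `Y_LHS = Y + B` is invertible, then the
vector `x = (ṽ_F, ṽ_J, ṽ_C, ĩ_S)` of incremental quantities equals
`Y_LHS⁻¹ ⬝ Y_RHS ⬝ v_F'`: it is uniquely determined by the prefault fault-bus
voltage and the network matrices, independently of the operating point. -/
theorem incremental_operating_point_independence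
    {nF nJ nC nS : Type*} [Fintype nF] [Fintype nJ] [Fintype nC] [Fintype nS]
    [DecidableEq nF] [DecidableEq nJ] [DecidableEq nC] [DecidableEq nS]
    (Y : Matrix (nF ⊕ nJ ⊕ nC ⊕ nS) (nF ⊕ nJ ⊕ nC ⊕ nS) ℂ)
    (YF : Matrix nF nF ℂ) (YJ : Matrix nJ nJ ℂ) (YC : Matrix nC nC ℂ)
    (vF vF' : nF → ℂ) (vJ vJ' : nJ → ℂ) (vC vC' : nC → ℂ) (vS vS' : nS → ℂ)
    (iC iC' : nC → ℂ) (iS iS' : nS → ℂ)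
    (hfault : Y *ᵥ blockVec vF vJ vC vS =
      blockVec (-(YF *ᵥ vF)) (-(YJ *ᵥ vJ)) (iC + YC *ᵥ vC) iS)
    (hpre : Y *ᵥ blockVec vF' vJ' vC' vS' =
      blockVec 0 (-(YJ *ᵥ vJ')) (iC' + YC *ᵥ vC') iS')
    (hvS : vS = vS') (hiC : iC = iC')
    (hinv : IsUnit (Y + Bmat Y YF YJ YC)) :
    blockVec (vF - vF') (vJ - vJ') (vC - vC') (iS - iS') =
      (Y + Bmat Y YF YJ YC)⁻¹ *ᵥ (YRHSmat YF *ᵥ vF') := by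

  subst hvS hiC
  have hdet : IsUnit (Y + Bmat Y YF YJ YC).det :=
    (Matrix.isUnit_iff_isUnit_det _).mp hinv
  have key : (Y + Bmat Y YF YJ YC) *ᵥ
      blockVec (vF - vF') (vJ - vJ') (vC - vC') (iS - iS') = YRHSmat YF *ᵥ vF' := by
    funext r
    have h1 := congrFun hfault r
    have h2 := congrFun hpre r
    cases r with
    | inl i =>
      simp only [Matrix.mulVec, dotProduct, Fintype.sum_sum_type, blockVec, Bmat,
        YRHSmat, Matrix.add_apply, Matrix.of_apply, Sum.elim_inl, Sum.elim_inr,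
        Pi.add_apply, Pi.neg_apply, Pi.sub_apply, Pi.zero_apply, reduceCtorEq, Finset.sum_const_zero, neg_zero,
        if_false, mul_sub, sub_mul, add_mul, neg_mul, zero_mul, mul_zero,
        Finset.sum_sub_distrib, Finset.sum_add_distrib, Finset.sum_neg_distrib] at h1 h2 ⊢
      linear_combination h1 - h2
    | inr r =>
      cases r with
      | inl i =>
        simp only [Matrix.mulVec, dotProduct, Fintype.sum_sum_type, blockVec, Bmat,
          YRHSmat, Matrix.add_apply, Matrix.of_apply, Sum.elim_inl, Sum.elim_inr,
          Pi.add_apply, Pi.neg_apply, Pi.sub_apply, Pi.zero_apply, reduceCtorEq, Finset.sum_const_zero, neg_zero,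
          Sum.inr.injEq, if_false, mul_sub, sub_mul, add_mul, neg_mul, zero_mul, mul_zero,
          Finset.sum_sub_distrib, Finset.sum_add_distrib, Finset.sum_neg_distrib] at h1 h2 ⊢
        linear_combination h1 - h2
      | inr r =>
        cases r with
        | inl i =>
          simp only [Matrix.mulVec, dotProduct, Fintype.sum_sum_type, blockVec, Bmat,
            YRHSmat, Matrix.add_apply, Matrix.of_apply, Sum.elim_inl, Sum.elim_inr,
            Pi.add_apply, Pi.neg_apply, Pi.sub_apply, Pi.zero_apply, reduceCtorEq, Finset.sum_const_zero, neg_zero,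
            Sum.inr.injEq, if_false, mul_sub, sub_mul, add_mul, neg_mul, zero_mul, mul_zero,
            Finset.sum_sub_distrib, Finset.sum_add_distrib, Finset.sum_neg_distrib] at h1 h2 ⊢
          linear_combination h1 - h2
        | inr i =>
          simp only [Matrix.mulVec, dotProduct, Fintype.sum_sum_type, blockVec, Bmat,
            YRHSmat, Matrix.add_apply, Matrix.of_apply, Sum.elim_inl, Sum.elim_inr,
            Pi.add_apply, Pi.neg_apply, Pi.sub_apply, Pi.zero_apply, reduceCtorEq, Finset.sum_const_zero, neg_zero,
            Sum.inr.injEq, mul_sub, sub_mul, add_mul, neg_mul, zero_mul, mul_zero,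
            Finset.sum_sub_distrib, Finset.sum_add_distrib, Finset.sum_neg_distrib,
            ite_mul, one_mul, Finset.sum_ite_eq, Finset.mem_univ, if_true] at h1 h2 ⊢
          linear_combination h1 - h2
  calc blockVec (vF - vF') (vJ - vJ') (vC - vC') (iS - iS')
      = (Y + Bmat Y YF YJ YC)⁻¹ *ᵥ ((Y + Bmat Y YF YJ YC) *ᵥ
          blockVec (vF - vF') (vJ - vJ') (vC - vC') (iS - iS')) := by
        rw [Matrix.mulVec_mulVec, Matrix.nonsing_inv_mul _ hdet, Matrix.one_mulVec]
    _ = (Y + Bmat Y YF YJ YC)⁻¹ *ᵥ (YRHSmat YF *ᵥ vF') := by rw [key]
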